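/- arXiv:2205.11752 — 3 statements merged into one kernel-verified Lean document; each statement's English description precedes it below -/
import Mathlib

section
/- For every positive integer k there exists a constant C_k > 0 such that for all t > 0, ∫_0^∞ |∂^k/∂t^k [ (t/(2√π)) s^{−3/2} e^{−t²/(4s)} ]| ds ≤ C_k / t^k. -/
open Real MeasureTheory


lemma abs_pow_le (n : ℕ) (x : ℝ) : |x| ^ n ≤ (1 + 4 ^ n * (Nat.factorial n)) * Real.exp (x ^ 2 / 4) := by
  have hexp1 : (1:ℝ) ≤ Real.exp (x ^ 2 / 4) := by
    apply Real.one_le_exp; positivity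
  have key : (x ^ 2 / 4) ^ n / (Nat.factorial n) ≤ Real.exp (x ^ 2 / 4) := by
    calc (x ^ 2 / 4) ^ n / (Nat.factorial n) ≤ ∑ i ∈ Finset.range (n+1), (x ^ 2 / 4) ^ i / (Nat.factorial i)  := by
          exact Finset.single_le_sum (f := fun i => (x ^ 2 / 4) ^ i / (Nat.factorial i))
            (fun i _ => by positivity) (Finset.self_mem_range_succ n)
      _ ≤ Real.exp (x ^ 2 / 4) := Real.sum_le_exp_of_nonneg (by positivity) _
  rcases le_total |x| 1 with h | h
  · calc |x| ^ n ≤ 1 ^ n := pow_le_pow_left₀ (abs_nonneg x) h n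
      _ = 1 := one_pow n
      _ ≤ (1 + 4 ^ n * (Nat.factorial n)) * Real.exp (x ^ 2 / 4) := by
          have h4 : (0:ℝ) < 4 ^ n * (Nat.factorial n) := by
            have := (by exact_mod_cast Nat.factorial_pos n : (0:ℝ) < (Nat.factorial n))
            positivity
          nlinarith [Real.exp_pos (x ^ 2 / 4)]
  · have h2 : |x| ^ n ≤ (x ^ 2) ^ n := by
      calc |x| ^ n ≤ (|x| ^ 2) ^ n := by
            apply pow_le_pow_left₀ (abs_nonneg x)
            nlinarith
        _ = (x ^ 2) ^ n := by rw [sq_abs]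
    have h3 : (x ^ 2) ^ n = 4 ^ n * (x ^ 2 / 4) ^ n := by
      rw [div_pow, ← mul_div_assoc, mul_div_cancel_left₀]; positivity
    calc |x| ^ n ≤ 4 ^ n * (x ^ 2 / 4) ^ n := by rw [← h3]; exact h2
      _ ≤ 4 ^ n * ((Nat.factorial n) * Real.exp (x ^ 2 / 4)) := by
          apply mul_le_mul_of_nonneg_left _ (by positivity)
          rw [div_le_iff₀ (by positivity : (0:ℝ) < ((Nat.factorial n) : ℝ))] at key
          linarith [key]
      _ ≤ (1 + 4 ^ n * (Nat.factorial n)) * Real.exp (x ^ 2 / 4) := by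
          nlinarith [Real.exp_pos (x ^ 2 / 4)]

lemma poly_bound (p : Polynomial ℝ) : ∃ M : ℝ, 0 < M ∧
    ∀ x : ℝ, |Polynomial.aeval x p| ≤ M * Real.exp (x ^ 2 / 4) := by
  set n := p.natDegree + 1 with hn
  refine ⟨∑ i ∈ Finset.range n, |p.coeff i| * (1 + 4 ^ i * (Nat.factorial i)) + 1, by positivity, fun x => ?_⟩
  have h1 : |Polynomial.aeval x p| ≤ ∑ i ∈ Finset.range n, |p.coeff i| * |x| ^ i := by
    rw [show (Polynomial.aeval x p : ℝ) = p.eval x from by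
      simp [Polynomial.aeval_def, Polynomial.eval₂_eq_eval_map, Polynomial.map_id]]
    rw [Polynomial.eval_eq_sum_range]
    refine (Finset.abs_sum_le_sum_abs _ _).trans ?_
    apply Finset.sum_le_sum
    intro i _
    rw [abs_mul, abs_pow]
  refine h1.trans ?_
  calc ∑ i ∈ Finset.range n, |p.coeff i| * |x| ^ i
      ≤ ∑ i ∈ Finset.range n, |p.coeff i| * ((1 + 4 ^ i * (Nat.factorial i)) * Real.exp (x ^ 2 / 4)) := by
        apply Finset.sum_le_sum
        intro i _
        exact mul_le_mul_of_nonneg_left (abs_pow_le i x) (abs_nonneg _)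
    _ = (∑ i ∈ Finset.range n, |p.coeff i| * (1 + 4 ^ i * (Nat.factorial i))) * Real.exp (x ^ 2 / 4) := by
        rw [Finset.sum_mul]; congr 1; ext i; ring
    _ ≤ (∑ i ∈ Finset.range n, |p.coeff i| * (1 + 4 ^ i * (Nat.factorial i)) + 1) * Real.exp (x ^ 2 / 4) := by
        apply mul_le_mul_of_nonneg_right _ (Real.exp_pos _).le
        linarith
lemma poly_bound_int (p : Polynomial ℤ) : ∃ M : ℝ, 0 < M ∧
    ∀ x : ℝ, |Polynomial.aeval x p| ≤ M * Real.exp (x ^ 2 / 4) := by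
  obtain ⟨M, hM0, hM⟩ := poly_bound (p.map (algebraMap ℤ ℝ))
  refine ⟨M, hM0, fun x => ?_⟩
  have h := hM x
  rw [show (Polynomial.aeval x (p.map (algebraMap ℤ ℝ)))
      = (p.map (algebraMap ℤ ℝ)).eval x from by
    simp [Polynomial.aeval_def, Polynomial.eval₂_eq_eval_map]] at h
  rw [Polynomial.aeval_def, Polynomial.eval₂_eq_eval_map]
  exact h

lemma iteratedDeriv_xexp (k : ℕ) (x : ℝ) :
    iteratedDeriv k (fun y : ℝ => y * Real.exp (-(y ^ 2 / 2))) x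
      = (-1 : ℝ) ^ k * Polynomial.aeval x (Polynomial.hermite (k + 1)) *
        Real.exp (-(x ^ 2 / 2)) := by
  have hG : ∀ y : ℝ, deriv (fun z : ℝ => Real.exp (-(z ^ 2 / 2))) y
      = -(y * Real.exp (-(y ^ 2 / 2))) := by
    intro y
    have h1 : HasDerivAt (fun z : ℝ => -(z ^ 2 / 2)) (-y) y := by
      have := ((hasDerivAt_pow 2 y).div_const 2).neg
      exact this.congr_deriv (by ring)
    have h : HasDerivAt (fun z : ℝ => Real.exp (-(z ^ 2 / 2)))
        (Real.exp (-(y ^ 2 / 2)) * -y) y := h1.exp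
    rw [h.deriv]; ring
  have hfun : (fun y : ℝ => y * Real.exp (-(y ^ 2 / 2)))
      = fun y => -(deriv (fun z : ℝ => Real.exp (-(z ^ 2 / 2))) y) := by
    funext y; rw [hG]; ring
  rw [hfun, iteratedDeriv_fun_neg]
  have : iteratedDeriv k (deriv fun z : ℝ => Real.exp (-(z ^ 2 / 2))) x
      = deriv^[k + 1] (fun z : ℝ => Real.exp (-(z ^ 2 / 2))) x := by
    rw [iteratedDeriv_eq_iterate, Function.iterate_succ_apply]
  rw [this, Polynomial.deriv_gaussian_eq_hermite_mul_gaussian]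
  rw [pow_succ]
  ring
lemma contDiff_xexp : ContDiff ℝ ⊤ (fun y : ℝ => y * Real.exp (-(y ^ 2 / 2))) :=
  contDiff_id.mul (((contDiff_id.pow 2).div_const 2).neg.exp)

lemma scaling_formula (k : ℕ) (s t : ℝ) (hs : 0 < s) :
    iteratedDeriv k
        (fun τ => τ / (2 * Real.sqrt Real.pi) * s ^ (-(3 : ℝ) / 2) *
          Real.exp (-τ ^ 2 / (4 * s))) t
      = (s ^ (-(3 : ℝ) / 2) * Real.sqrt (2 * s) / (2 * Real.sqrt Real.pi)) *
        ((Real.sqrt (2 * s))⁻¹ ^ k *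
          iteratedDeriv k (fun y : ℝ => y * Real.exp (-(y ^ 2 / 2)))
            ((Real.sqrt (2 * s))⁻¹ * t)) := by
  set a : ℝ := (Real.sqrt (2 * s))⁻¹ with ha
  set c : ℝ := s ^ (-(3 : ℝ) / 2) * Real.sqrt (2 * s) / (2 * Real.sqrt Real.pi) with hc
  have hsq : Real.sqrt (2 * s) ^ 2 = 2 * s := Real.sq_sqrt (by positivity)
  have hsqpos : 0 < Real.sqrt (2 * s) := Real.sqrt_pos.mpr (by positivity)
  have hpi : 0 < Real.sqrt Real.pi := Real.sqrt_pos.mpr Real.pi_pos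
  have hfun : (fun τ => τ / (2 * Real.sqrt Real.pi) * s ^ (-(3 : ℝ) / 2) *
          Real.exp (-τ ^ 2 / (4 * s)))
      = fun τ => c * ((fun y : ℝ => y * Real.exp (-(y ^ 2 / 2))) (a * τ)) := by
    funext τ
    have hexp : -((a * τ) ^ 2 / 2) = -τ ^ 2 / (4 * s) := by
      rw [ha, mul_pow, inv_pow, hsq]
      field_simp
      ring
    simp only []
    rw [hexp, hc, ha]
    field_simp
  rw [hfun]
  have hcd : ContDiffOn ℝ k
      (fun τ : ℝ => (fun y : ℝ => y * Real.exp (-(y ^ 2 / 2))) (a * τ)) Set.univ := by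
    exact ((contDiff_xexp.of_le le_top).comp (contDiff_const.mul contDiff_id)).contDiffOn
  rw [← iteratedDerivWithin_univ,
    iteratedDerivWithin_const_mul (Set.mem_univ t) uniqueDiffOn_univ c (hcd t (Set.mem_univ t)),
    iteratedDerivWithin_univ]
  congr 1
  exact congrFun (iteratedDeriv_comp_const_mul (contDiff_xexp.of_le le_top) a) t
lemma pointwise_bound (k : ℕ) (M : ℝ) (hM0 : 0 ≤ M)
    (hM : ∀ x : ℝ, |Polynomial.aeval x (Polynomial.hermite (k + 1))| ≤ M * Real.exp (x ^ 2 / 4))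
    (s t : ℝ) (hs : 0 < s) :
    |iteratedDeriv k
        (fun τ => τ / (2 * Real.sqrt Real.pi) * s ^ (-(3 : ℝ) / 2) *
          Real.exp (-τ ^ 2 / (4 * s))) t|
      ≤ ((2 : ℝ) ^ ((1 - (k : ℝ)) / 2) / (2 * Real.sqrt Real.pi) * M) *
        (s ^ (-(1 : ℝ) - (k : ℝ) / 2) * Real.exp (-(t ^ 2 / (8 * s)))) := by
  have h2s : (0 : ℝ) < 2 * s := by positivity
  have hsq : Real.sqrt (2 * s) ^ 2 = 2 * s := Real.sq_sqrt h2s.le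
  have hsqpos : 0 < Real.sqrt (2 * s) := Real.sqrt_pos.mpr h2s
  have hpi : 0 < Real.sqrt Real.pi := Real.sqrt_pos.mpr Real.pi_pos
  set a : ℝ := (Real.sqrt (2 * s))⁻¹ with ha
  set c : ℝ := s ^ (-(3 : ℝ) / 2) * Real.sqrt (2 * s) / (2 * Real.sqrt Real.pi) with hc
  have hapos : 0 < a := by positivity
  have hcpos : 0 < c := by
    apply div_pos (mul_pos (Real.rpow_pos_of_pos hs _) hsqpos) (by positivity)
  rw [scaling_formula k s t hs, iteratedDeriv_xexp]
  set A : ℝ := Polynomial.aeval (a * t) (Polynomial.hermite (k + 1)) with hA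
  set E : ℝ := Real.exp (-((a * t) ^ 2 / 2)) with hE
  have habs : |c * (a ^ k * ((-1) ^ k * A * E))| = c * a ^ k * (|A| * E) := by
    have h1 : |(-1 : ℝ) ^ k| = 1 := by rw [abs_pow, abs_neg, abs_one, one_pow]
    rw [abs_mul, abs_mul, abs_mul, abs_mul, h1,
      abs_of_pos hcpos, abs_of_pos (pow_pos hapos k), abs_of_pos (Real.exp_pos _)]
    ring
  rw [habs]
  have hExp : Real.exp ((a * t) ^ 2 / 4) * E = Real.exp (-(t ^ 2 / (8 * s))) := by
    rw [hE, ← Real.exp_add]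
    congr 1
    have : (a * t) ^ 2 = t ^ 2 / (2 * s) := by
      rw [ha, mul_pow, inv_pow, hsq]; ring
    rw [this]; field_simp; ring
  have hca : c * a ^ k
      = (2 : ℝ) ^ ((1 - (k : ℝ)) / 2) / (2 * Real.sqrt Real.pi) * s ^ (-(1 : ℝ) - (k : ℝ) / 2) * Real.exp 0 := by
    rw [Real.exp_zero, mul_one]
    rw [hc, ha, Real.sqrt_eq_rpow, ← Real.rpow_neg h2s.le,
      ← Real.rpow_natCast ((2 * s) ^ (-(1 / 2) : ℝ)) k, ← Real.rpow_mul h2s.le]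
    rw [div_mul_eq_mul_div, mul_assoc, ← Real.rpow_add h2s]
    rw [Real.mul_rpow (by norm_num : (0:ℝ) ≤ 2) hs.le, ← mul_assoc, mul_comm (s ^ (-(3:ℝ)/2))]
    rw [mul_assoc, ← Real.rpow_add hs]
    rw [show (1 / 2 + -(1 / 2) * (k : ℝ)) = (1 - (k : ℝ)) / 2 by ring,
      show (-(3 : ℝ) / 2 + (1 - (k : ℝ)) / 2) = -(1 : ℝ) - (k : ℝ) / 2 by ring]
    ring
  calc c * a ^ k * (|A| * E)
      ≤ c * a ^ k * (M * Real.exp ((a * t) ^ 2 / 4) * E) := by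
        apply mul_le_mul_of_nonneg_left _ (by positivity)
        exact mul_le_mul_of_nonneg_right (hM _) (Real.exp_pos _).le
    _ = c * a ^ k * M * (Real.exp ((a * t) ^ 2 / 4) * E) := by ring
    _ = ((2 : ℝ) ^ ((1 - (k : ℝ)) / 2) / (2 * Real.sqrt Real.pi) * M) *
        (s ^ (-(1 : ℝ) - (k : ℝ) / 2) * Real.exp (-(t ^ 2 / (8 * s)))) := by
        rw [hExp, hca, Real.exp_zero]
        ring

theorem oneSidedStable_deriv_bound (k : ℕ) (hk : 0 < k) :
    ∃ C : ℝ, 0 < C ∧ ∀ t : ℝ, 0 < t →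
      (∫ s in Set.Ioi (0 : ℝ),
        |iteratedDeriv k
          (fun τ => τ / (2 * Real.sqrt Real.pi) * s ^ (-(3 : ℝ) / 2) *
            Real.exp (-τ ^ 2 / (4 * s))) t|) ≤ C / t ^ k := by
  obtain ⟨M, hM0, hM⟩ := poly_bound_int (Polynomial.hermite (k + 1))
  have hpi : 0 < Real.sqrt Real.pi := Real.sqrt_pos.mpr Real.pi_pos
  set K : ℝ := (2 : ℝ) ^ ((1 - (k : ℝ)) / 2) / (2 * Real.sqrt Real.pi) * M with hK
  have hKpos : 0 < K := by
    have h2 : (0:ℝ) < (2 : ℝ) ^ ((1 - (k : ℝ)) / 2) := Real.rpow_pos_of_pos two_pos _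
    positivity
  have hk2 : 0 < (k : ℝ) / 2 := by
    have : (0:ℝ) < (k:ℝ) := Nat.cast_pos.mpr hk
    positivity
  have hGam : 0 < Real.Gamma ((k : ℝ) / 2) := Real.Gamma_pos_of_pos hk2
  have h8 : (0:ℝ) < (8 : ℝ) ^ ((k : ℝ) / 2) := Real.rpow_pos_of_pos (by norm_num) _
  refine ⟨K * ((8 : ℝ) ^ ((k : ℝ) / 2) * Real.Gamma ((k : ℝ) / 2)), by positivity,
    fun t ht => ?_⟩
  set r : ℝ := t ^ 2 / 8 with hr
  have hrpos : 0 < r := by positivity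
  set g0 : ℝ → ℝ := fun u => u ^ ((k : ℝ) / 2 - 1) * Real.exp (-(r * u)) with hg0def
  have hbase : IntegrableOn (fun x : ℝ => Real.exp (-x) * x ^ ((k : ℝ) / 2 - 1))
      (Set.Ioi 0) := Real.GammaIntegral_convergent hk2
  have hcomp : IntegrableOn
      (fun u : ℝ => Real.exp (-(r * u)) * (r * u) ^ ((k : ℝ) / 2 - 1)) (Set.Ioi 0) := by
    have := (integrableOn_Ioi_comp_mul_left_iff
      (fun x : ℝ => Real.exp (-x) * x ^ ((k : ℝ) / 2 - 1)) 0 hrpos).mpr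
    rw [mul_zero] at this
    exact this hbase
  have hg0 : IntegrableOn g0 (Set.Ioi 0) := by
    have h2 : IntegrableOn
        (fun u : ℝ => r ^ (-((k : ℝ) / 2 - 1)) *
          (Real.exp (-(r * u)) * (r * u) ^ ((k : ℝ) / 2 - 1))) (Set.Ioi 0) :=
      hcomp.const_mul _
    apply h2.congr_fun _ measurableSet_Ioi
    intro u hu
    have hu0 : (0:ℝ) < u := hu
    simp only []
    rw [Real.mul_rpow hrpos.le hu0.le, ← mul_assoc, ← mul_assoc,
      mul_comm (r ^ (-((k : ℝ) / 2 - 1))) (Real.exp (-(r * u)))]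
    rw [mul_assoc (Real.exp (-(r * u))), ← Real.rpow_add hrpos,
      neg_add_cancel, Real.rpow_zero]
    simp only [hg0def]
    ring
  set D : ℝ → ℝ := fun x => x ^ (-(1 : ℝ) - (k : ℝ) / 2) * Real.exp (-(t ^ 2 / (8 * x)))
    with hDdef
  have hDid : ∀ x ∈ Set.Ioi (0:ℝ),
      (|(-1 : ℝ)| * x ^ ((-1 : ℝ) - 1)) • g0 (x ^ (-1 : ℝ)) = D x := by
    intro x hx
    have hx0 : (0:ℝ) < x := hx
    rw [smul_eq_mul, abs_neg, abs_one, one_mul, hg0def]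
    simp only []
    rw [← Real.rpow_mul hx0.le, ← mul_assoc, ← Real.rpow_add hx0]
    rw [show ((-1 : ℝ) - 1 + -1 * ((k : ℝ) / 2 - 1)) = -(1 : ℝ) - (k : ℝ) / 2 by ring]
    rw [Real.rpow_neg_one, hDdef]
    congr 2
    rw [hr]; field_simp
  have hD : IntegrableOn D (Set.Ioi 0) := by
    have := (integrableOn_Ioi_comp_rpow_iff g0 (by norm_num : (-1:ℝ) ≠ 0)).mpr hg0
    exact this.congr_fun hDid measurableSet_Ioi
  have hDval : ∫ x in Set.Ioi 0, D x
      = (1 / r) ^ ((k : ℝ) / 2) * Real.Gamma ((k : ℝ) / 2) := by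
    rw [← Real.integral_rpow_mul_exp_neg_mul_Ioi hk2 hrpos]
    rw [← integral_comp_rpow_Ioi g0 (by norm_num : (-1:ℝ) ≠ 0)]
    exact setIntegral_congr_fun measurableSet_Ioi (fun x hx => (hDid x hx).symm)
  -- measurability of the integrand
  set F : ℝ → ℝ := fun s =>
    |iteratedDeriv k
      (fun τ => τ / (2 * Real.sqrt Real.pi) * s ^ (-(3 : ℝ) / 2) *
        Real.exp (-τ ^ 2 / (4 * s))) t| with hFdef
  have hGcont : ContinuousOn (fun s : ℝ =>
      |(s ^ (-(3 : ℝ) / 2) * Real.sqrt (2 * s) / (2 * Real.sqrt Real.pi)) *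
        ((Real.sqrt (2 * s))⁻¹ ^ k *
          ((-1 : ℝ) ^ k *
            Polynomial.aeval ((Real.sqrt (2 * s))⁻¹ * t) (Polynomial.hermite (k + 1)) *
            Real.exp (-(((Real.sqrt (2 * s))⁻¹ * t) ^ 2 / 2))))|) (Set.Ioi 0) := by
    apply ContinuousOn.abs
    have hsqrt : ContinuousOn (fun s : ℝ => Real.sqrt (2 * s)) (Set.Ioi 0) :=
      (Real.continuous_sqrt.comp (continuous_const.mul continuous_id)).continuousOn
    have hsqrtne : ∀ s ∈ Set.Ioi (0:ℝ), Real.sqrt (2 * s) ≠ 0 := by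
      intro s hs
      have : (0:ℝ) < s := hs
      exact ne_of_gt (Real.sqrt_pos.mpr (by positivity))
    have hinv : ContinuousOn (fun s : ℝ => (Real.sqrt (2 * s))⁻¹) (Set.Ioi 0) :=
      hsqrt.inv₀ hsqrtne
    have hrpow : ContinuousOn (fun s : ℝ => s ^ (-(3 : ℝ) / 2)) (Set.Ioi 0) := by
      intro s hs
      have : (0:ℝ) < s := hs
      exact (Real.continuousAt_rpow_const s _ (Or.inl this.ne')).continuousWithinAt
    have hlin : ContinuousOn (fun s : ℝ => (Real.sqrt (2 * s))⁻¹ * t) (Set.Ioi 0) :=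
      hinv.mul continuousOn_const
    have haev : ContinuousOn (fun s : ℝ =>
        Polynomial.aeval ((Real.sqrt (2 * s))⁻¹ * t) (Polynomial.hermite (k + 1)))
        (Set.Ioi 0) :=
      (Polynomial.continuous_aeval (Polynomial.hermite (k + 1))).comp_continuousOn hlin
    have hexp : ContinuousOn (fun s : ℝ =>
        Real.exp (-(((Real.sqrt (2 * s))⁻¹ * t) ^ 2 / 2))) (Set.Ioi 0) :=
      Real.continuous_exp.comp_continuousOn (((hlin.pow 2).div_const 2).neg)
    exact ((hrpow.mul hsqrt).div_const _).mul
      ((hinv.pow k).mul ((continuousOn_const.mul haev).mul hexp))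
  have hFeq : ∀ s ∈ Set.Ioi (0:ℝ), (fun s : ℝ =>
      |(s ^ (-(3 : ℝ) / 2) * Real.sqrt (2 * s) / (2 * Real.sqrt Real.pi)) *
        ((Real.sqrt (2 * s))⁻¹ ^ k *
          ((-1 : ℝ) ^ k *
            Polynomial.aeval ((Real.sqrt (2 * s))⁻¹ * t) (Polynomial.hermite (k + 1)) *
            Real.exp (-(((Real.sqrt (2 * s))⁻¹ * t) ^ 2 / 2))))|) s = F s := by
    intro s hs
    have hs0 : (0:ℝ) < s := hs
    rw [hFdef]
    simp only []
    rw [scaling_formula k s t hs0, iteratedDeriv_xexp]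
  have hFmeas : AEStronglyMeasurable F (volume.restrict (Set.Ioi 0)) := by
    apply (hGcont.aestronglyMeasurable measurableSet_Ioi).congr
    exact (ae_restrict_iff' measurableSet_Ioi).mpr (Filter.Eventually.of_forall hFeq)
  have hbound : ∀ s ∈ Set.Ioi (0:ℝ), F s ≤ K * D s := by
    intro s hs
    have hs0 : (0:ℝ) < s := hs
    have := pointwise_bound k M hM0.le hM s t hs0
    calc F s ≤ ((2 : ℝ) ^ ((1 - (k : ℝ)) / 2) / (2 * Real.sqrt Real.pi) * M) *
        (s ^ (-(1 : ℝ) - (k : ℝ) / 2) * Real.exp (-(t ^ 2 / (8 * s)))) := this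
      _ = K * D s := by rw [hK, hDdef]
  have hKD : IntegrableOn (fun s => K * D s) (Set.Ioi 0) := hD.const_mul K
  have hFint : IntegrableOn F (Set.Ioi 0) := by
    apply hKD.mono' hFmeas
    refine (ae_restrict_iff' measurableSet_Ioi).mpr (Filter.Eventually.of_forall ?_)
    intro s hs
    rw [Real.norm_eq_abs, hFdef]
    simp only []
    rw [abs_abs]
    exact hbound s hs
  have htk : (0:ℝ) < t ^ k := pow_pos ht k
  calc (∫ s in Set.Ioi (0:ℝ), F s) ≤ ∫ s in Set.Ioi (0:ℝ), K * D s :=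
        setIntegral_mono_on hFint hKD measurableSet_Ioi hbound
    _ = K * ∫ s in Set.Ioi (0:ℝ), D s := by rw [integral_const_mul]
    _ = K * ((1 / r) ^ ((k : ℝ) / 2) * Real.Gamma ((k : ℝ) / 2)) := by rw [hDval]
    _ = K * ((8 : ℝ) ^ ((k : ℝ) / 2) * Real.Gamma ((k : ℝ) / 2)) / t ^ k := by
        have h1 : (1 / r) = 8 / t ^ 2 := by rw [hr]; field_simp
        have h2 : ((t:ℝ) ^ 2) ^ ((k : ℝ) / 2) = t ^ k := by
          rw [← Real.rpow_natCast t 2, ← Real.rpow_mul ht.le,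
            show (((2:ℕ):ℝ) * ((k : ℝ) / 2)) = ((k:ℕ):ℝ) by push_cast; ring,
            Real.rpow_natCast]
        rw [h1, Real.div_rpow (by norm_num : (0:ℝ) ≤ 8) (sq_nonneg t), h2]
        field_simp
        try ring
end

section
/- Bochner's subordination identity: for every a ≥ 0, (1/√π) ∫_0^∞ u^{−1/2} e^{−u} e^{−a²/(4u)} du = e^{−a}. -/
open Real MeasureTheory Set

section aux

variable {c : ℝ}

lemma inv_img (hc : 0 < c) : (fun t : ℝ => c / t) '' Ioi 0 = Ioi 0 := by
  ext y
  constructor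
  · rintro ⟨x, hx, rfl⟩
    exact div_pos hc hx
  · intro hy
    exact ⟨c / y, div_pos hc hy, by field_simp⟩

lemma inv_deriv (hc : 0 < c) :
    ∀ x ∈ Ioi (0:ℝ), HasDerivWithinAt (fun t : ℝ => c / t) (-(c / x ^ 2)) (Ioi 0) x := by
  intro x hx
  have hx0 : x ≠ 0 := ne_of_gt (mem_Ioi.mp hx)
  have hval : -(c / x ^ 2) = c * -(x ^ 2)⁻¹ := by field_simp
  rw [hval]
  simp only [div_eq_mul_inv]
  exact ((hasDerivAt_inv hx0).const_mul c).hasDerivWithinAt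

lemma invMap_inj (hc : 0 < c) : InjOn (fun t : ℝ => c / t) (Ioi 0) := by
  intro x hx y hy h
  have hx0 : x ≠ 0 := ne_of_gt (mem_Ioi.mp hx)
  have hy0 : y ≠ 0 := ne_of_gt (mem_Ioi.mp hy)
  simp only at h
  field_simp at h
  rcases h with h | h
  · rfl

lemma glasser_deriv (hc : 0 < c) :
    ∀ x ∈ Ioi (0:ℝ), HasDerivWithinAt (fun t : ℝ => t - c / t) (1 + c / x ^ 2) (Ioi 0) x := by
  intro x hx
  have hx0 : x ≠ 0 := ne_of_gt (mem_Ioi.mp hx)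
  have hval : 1 + c / x ^ 2 = 1 - c * -(x ^ 2)⁻¹ := by field_simp; ring
  rw [hval]
  simp only [div_eq_mul_inv]
  exact ((hasDerivAt_id x).sub ((hasDerivAt_inv hx0).const_mul c)).hasDerivWithinAt

lemma glasser_inj (hc : 0 < c) : InjOn (fun t : ℝ => t - c / t) (Ioi 0) := by
  have : StrictMonoOn (fun t : ℝ => t - c / t) (Ioi 0) := by
    intro x hx y hy hxy
    have h1 : c / y < c / x := div_lt_div_of_pos_left hc (mem_Ioi.mp hx) hxy
    simp only
    linarith
  exact this.injOn

lemma glasser_img (hc : 0 < c) : (fun t : ℝ => t - c / t) '' Ioi 0 = univ := by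
  ext s
  simp only [mem_univ, iff_true, mem_image]
  set r := Real.sqrt (s ^ 2 + 4 * c) with hr
  have hr2 : r ^ 2 = s ^ 2 + 4 * c := Real.sq_sqrt (by nlinarith)
  have hrs : |s| < r := by
    rw [hr]
    exact (Real.lt_sqrt (abs_nonneg s)).mpr (by rw [sq_abs]; linarith)
  have ht : 0 < (s + r) / 2 := by
    have := neg_abs_le s
    linarith [hrs]
  refine ⟨(s + r) / 2, ht, ?_⟩
  have hne : (s + r) / 2 ≠ 0 := ne_of_gt ht
  show (s + r) / 2 - c / ((s + r) / 2) = s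
  have hdiv : c / ((s + r) / 2) = (s + r) / 2 - s := by
    rw [div_eq_iff hne]; nlinarith [hr2]
  linarith [hdiv]

end aux

lemma glasser (c : ℝ) (hc : 0 < c) :
    ∫ t in Ioi (0:ℝ), Real.exp (-(t - c / t) ^ 2) = Real.sqrt π / 2 := by
  set E : ℝ → ℝ := fun t => Real.exp (-(t - c / t) ^ 2) with hE
  -- integrability of E on Ioi 0
  have hmeas : AEStronglyMeasurable E (volume.restrict (Ioi (0:ℝ))) := by
    apply ContinuousOn.aestronglyMeasurable _ measurableSet_Ioi
    apply ContinuousOn.rexp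
    apply ContinuousOn.neg
    apply ContinuousOn.pow
    exact continuousOn_id.sub (continuousOn_const.div continuousOn_id
      (fun x hx => ne_of_gt hx))
  have hint1 : IntegrableOn E (Ioi 0) := by
    refine Integrable.mono' (g := fun t => Real.exp (2 * c) * Real.exp (-1 * t ^ 2)) ?_ hmeas ?_
    · exact ((integrable_exp_neg_mul_sq one_pos).const_mul _).integrableOn
    · filter_upwards [ae_restrict_mem measurableSet_Ioi] with t ht
      rw [Real.norm_eq_abs, abs_of_pos (Real.exp_pos _), ← Real.exp_add]
      apply Real.exp_le_exp.mpr
      have ht' : t ≠ 0 := ne_of_gt ht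
      have h1 : (t - c / t) ^ 2 = t ^ 2 - 2 * c + c ^ 2 / t ^ 2 := by field_simp; ring
      have h2 : 0 ≤ c ^ 2 / t ^ 2 := div_nonneg (sq_nonneg c) (sq_nonneg t)
      nlinarith
  -- the inversion substitution t ↦ c/t
  have hsub := integral_image_eq_integral_abs_deriv_smul measurableSet_Ioi
    (inv_deriv hc) (invMap_inj hc) E
  rw [inv_img hc] at hsub
  have hEinv : ∀ t ∈ Ioi (0:ℝ), |(-(c / t ^ 2))| • E (c / t) = c / t ^ 2 * E t := by
    intro t ht
    have ht' : t ≠ 0 := ne_of_gt ht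
    have h1 : |(-(c / t ^ 2))| = c / t ^ 2 := by
      rw [abs_neg, abs_of_pos (div_pos hc (by positivity))]
    have h2 : E (c / t) = E t := by
      simp only [hE]
      congr 1
      have : c / (c / t) = t := by field_simp
      rw [this]
      ring
    rw [h1, h2, smul_eq_mul]
  have hsub2 : ∫ t in Ioi (0:ℝ), E t = ∫ t in Ioi (0:ℝ), c / t ^ 2 * E t := by
    rw [hsub]
    exact setIntegral_congr_fun measurableSet_Ioi hEinv
  have hint2 : IntegrableOn (fun t => c / t ^ 2 * E t) (Ioi 0) := by
    have := (integrableOn_image_iff_integrableOn_abs_deriv_smul measurableSet_Ioi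
      (inv_deriv hc) (invMap_inj hc) E).mp (by rw [inv_img hc]; exact hint1)
    exact this.congr_fun hEinv measurableSet_Ioi
  -- the main substitution s = t - c/t
  have hmain := integral_image_eq_integral_abs_deriv_smul measurableSet_Ioi
    (glasser_deriv hc) (glasser_inj hc) (fun x => Real.exp (-x ^ 2))
  rw [glasser_img hc] at hmain
  have hlhs : ∫ x in (univ : Set ℝ), Real.exp (-x ^ 2) = Real.sqrt π := by
    rw [Measure.restrict_univ]
    have := integral_gaussian 1
    simpa using this
  have hrhs : ∫ t in Ioi (0:ℝ), |1 + c / t ^ 2| • Real.exp (-(t - c / t) ^ 2)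
      = (∫ t in Ioi (0:ℝ), E t) + ∫ t in Ioi (0:ℝ), c / t ^ 2 * E t := by
    rw [← integral_add hint1 hint2]
    apply setIntegral_congr_fun measurableSet_Ioi
    intro t ht
    have h1 : |1 + c / t ^ 2| = 1 + c / t ^ 2 := by
      rw [abs_of_pos]; positivity
    simp only [hE, h1, smul_eq_mul]
    ring
  rw [hlhs, hrhs] at hmain
  rw [← hsub2] at hmain
  linarith

lemma subord_aux (c : ℝ) (hc : 0 ≤ c) :
    ∫ t in Ioi (0:ℝ), Real.exp (-t ^ 2 - c ^ 2 / t ^ 2)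
      = Real.sqrt π / 2 * Real.exp (-(2 * c)) := by
  rcases eq_or_lt_of_le hc with rfl | hc
  · have : ∀ t ∈ Ioi (0:ℝ), Real.exp (-t ^ 2 - (0:ℝ) ^ 2 / t ^ 2) = Real.exp (-1 * t ^ 2) := by
      intro t ht; norm_num
    rw [setIntegral_congr_fun measurableSet_Ioi this, integral_gaussian_Ioi]
    norm_num
  · have heq : ∀ t ∈ Ioi (0:ℝ), Real.exp (-t ^ 2 - c ^ 2 / t ^ 2)
        = Real.exp (-(2 * c)) * Real.exp (-(t - c / t) ^ 2) := by
      intro t ht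
      have ht' : t ≠ 0 := ne_of_gt ht
      rw [← Real.exp_add]
      congr 1
      field_simp
      ring
    rw [setIntegral_congr_fun measurableSet_Ioi heq, integral_const_mul, glasser c hc]
    ring

theorem bochner_subordination (a : ℝ) (ha : 0 ≤ a) :
    (1 / Real.sqrt Real.pi) *
      ∫ u in Set.Ioi (0 : ℝ),
        u ^ (-(1 : ℝ) / 2) * Real.exp (-u) * Real.exp (-a ^ 2 / (4 * u)) =
      Real.exp (-a) := by
  have h2 := integral_comp_rpow_Ioi_of_pos
    (g := fun u : ℝ => u ^ (-(1 : ℝ) / 2) * Real.exp (-u) * Real.exp (-a ^ 2 / (4 * u)))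
    zero_lt_two
  rw [← h2]
  have heq : ∀ x ∈ Ioi (0:ℝ),
      (2 * x ^ ((2:ℝ) - 1)) • ((x ^ (2:ℝ)) ^ (-(1 : ℝ) / 2) * Real.exp (-(x ^ (2:ℝ)))
        * Real.exp (-a ^ 2 / (4 * x ^ (2:ℝ))))
      = 2 * Real.exp (-x ^ 2 - (a / 2) ^ 2 / x ^ 2) := by
    intro x hx
    have hx' : (0:ℝ) < x := hx
    have hxne : x ≠ 0 := ne_of_gt hx'
    have e1 : x ^ ((2:ℝ) - 1) = x := by norm_num
    have e2 : x ^ (2:ℝ) = x ^ (2:ℕ) := by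
      rw [← Real.rpow_natCast x 2]; norm_num
    have e3 : ((x : ℝ) ^ (2:ℕ)) ^ (-(1:ℝ)/2) = x⁻¹ := by
      rw [← Real.rpow_natCast x 2, ← Real.rpow_mul hx'.le,
        show ((2:ℕ):ℝ) * (-(1:ℝ)/2) = -1 by norm_num, Real.rpow_neg_one]
    have e5 : Real.exp (-x ^ 2 - (a/2) ^ 2 / x ^ 2)
        = Real.exp (-(x ^ (2:ℕ))) * Real.exp (-a ^ 2 / (4 * x ^ (2:ℕ))) := by
      rw [← Real.exp_add]
      congr 1
      field_simp
      ring
    rw [e1, e2, e3, smul_eq_mul, e5]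
    field_simp
  rw [setIntegral_congr_fun measurableSet_Ioi heq, integral_const_mul,
    subord_aux (a / 2) (by linarith)]
  have hπ : Real.sqrt π ≠ 0 := ne_of_gt (Real.sqrt_pos.mpr Real.pi_pos)
  have : 2 * (a / 2) = a := by ring
  rw [this]
  field_simp
end

section
/- Classical Hardy inequality (second form): if f : (0,∞) → [0,∞) is measurable, p ≥ 1 and r > 0, then ∫_0^∞ (∫_x^∞ f(y) dy)^p x^{r−1} dx ≤ (p/r)^p ∫_0^∞ (y f(y))^p y^{r−1} dy. -/
open Real MeasureTheory ENNReal

lemma hardy_lint_tail {a x : ℝ} (ha : a < -1) (hx : 0 < x) :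
    ∫⁻ y in Set.Ioi x, ENNReal.ofReal (y ^ a) = ENNReal.ofReal (x ^ (a + 1) / (-(a + 1))) := by
  rw [← ofReal_integral_eq_lintegral_ofReal (integrableOn_Ioi_rpow_of_lt ha hx)
      (by filter_upwards [ae_restrict_mem measurableSet_Ioi] with y hy
          exact Real.rpow_nonneg (le_of_lt (hx.trans hy)) a),
    integral_Ioi_rpow_of_lt ha hx, div_neg, neg_div]

lemma hardy_lint_head {a y : ℝ} (ha : -1 < a) (hy : 0 < y) :
    ∫⁻ x in Set.Ioo 0 y, ENNReal.ofReal (x ^ a) = ENNReal.ofReal (y ^ (a + 1) / (a + 1)) := by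
  have hint : IntegrableOn (fun x : ℝ => x ^ a) (Set.Ioo 0 y) := by
    have h := intervalIntegral.intervalIntegrable_rpow' (a := 0) (b := y) ha
    rw [intervalIntegrable_iff_integrableOn_Ioc_of_le hy.le] at h
    exact h.mono_set Set.Ioo_subset_Ioc_self
  rw [← ofReal_integral_eq_lintegral_ofReal hint
      (by filter_upwards [ae_restrict_mem measurableSet_Ioo] with x hx
          exact Real.rpow_nonneg hx.1.le a)]
  congr 1
  rw [← MeasureTheory.integral_Ioc_eq_integral_Ioo, ← intervalIntegral.integral_of_le hy.le,
    integral_rpow (Or.inl ha), Real.zero_rpow (by linarith), sub_zero]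

lemma hardy_swap (g h : ℝ → ℝ≥0∞) (hg : Measurable g) (hh : Measurable h) :
    ∫⁻ x in Set.Ioi (0:ℝ), g x * ∫⁻ y in Set.Ioi x, h y
      = ∫⁻ y in Set.Ioi (0:ℝ), h y * ∫⁻ x in Set.Ioo 0 y, g x := by
  set μ := volume.restrict (Set.Ioi (0:ℝ)) with hμ
  set k : ℝ → ℝ → ℝ≥0∞ := fun x y =>
    Set.indicator {p : ℝ × ℝ | p.1 < p.2} (fun p => g p.1 * h p.2) (x, y) with hk
  have hkm : Measurable (Function.uncurry k) := by
    have : Function.uncurry k =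
        Set.indicator {p : ℝ × ℝ | p.1 < p.2} (fun p => g p.1 * h p.2) := rfl
    rw [this]
    exact ((hg.comp measurable_fst).mul (hh.comp measurable_snd)).indicator
      (measurableSet_lt measurable_fst measurable_snd)
  have L1 : ∀ x ∈ Set.Ioi (0:ℝ), (∫⁻ y, k x y ∂μ) = g x * ∫⁻ y in Set.Ioi x, h y := by
    intro x hx
    have hfun : (fun y => k x y) = (Set.Ioi x).indicator (fun y => g x * h y) := by
      ext y
      simp [hk, Set.indicator_apply, Set.mem_Ioi, Set.mem_setOf_eq]
    rw [hfun, lintegral_indicator measurableSet_Ioi, hμ,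
      Measure.restrict_restrict measurableSet_Ioi,
      Set.inter_eq_self_of_subset_left (Set.Ioi_subset_Ioi (le_of_lt hx)),
      lintegral_const_mul _ hh]
  have R1 : ∀ y ∈ Set.Ioi (0:ℝ), (∫⁻ x, k x y ∂μ) = h y * ∫⁻ x in Set.Ioo 0 y, g x := by
    intro y hy
    have hfun : (fun x => k x y) = (Set.Iio y).indicator (fun x => g x * h y) := by
      ext x
      simp [hk, Set.indicator_apply, Set.mem_Iio, Set.mem_setOf_eq]
    rw [hfun, lintegral_indicator measurableSet_Iio, hμ,
      Measure.restrict_restrict measurableSet_Iio, Set.Iio_inter_Ioi,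
      lintegral_mul_const _ hg, mul_comm]
  calc ∫⁻ x in Set.Ioi (0:ℝ), g x * ∫⁻ y in Set.Ioi x, h y
      = ∫⁻ x, ∫⁻ y, k x y ∂μ ∂μ := by
        refine (setLIntegral_congr_fun measurableSet_Ioi ?_).symm
        exact fun x hx => L1 x hx
    _ = ∫⁻ y, ∫⁻ x, k x y ∂μ ∂μ := lintegral_lintegral_swap hkm.aemeasurable
    _ = ∫⁻ y in Set.Ioi (0:ℝ), h y * ∫⁻ x in Set.Ioo 0 y, g x :=
        setLIntegral_congr_fun measurableSet_Ioi
          (fun y hy => R1 y hy)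

lemma hardy_holder_pointwise (f : ℝ → ℝ≥0∞) (hf : Measurable f) (p r : ℝ) (hp1 : 1 < p)
    (hr : 0 < r) (x : ℝ) (hx : (0:ℝ) < x) :
    (∫⁻ y in Set.Ioi x, f y) ^ p * ENNReal.ofReal (x ^ (r - 1)) ≤
      ENNReal.ofReal ((p / r) ^ (p / (p/(p-1)))) *
        (ENNReal.ofReal (x ^ (r/p - 1)) *
          ∫⁻ y in Set.Ioi x, (f y * ENNReal.ofReal (y ^ ((p-1)/p * (r/p + 1)))) ^ p) := by
  set q : ℝ := p / (p - 1) with hqdef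
  set s : ℝ := (p-1)/p * (r/p + 1) with hsdef
  have hp0 : (0:ℝ) < p := by linarith
  have hq : p.HolderConjugate q := Real.HolderConjugate.conjExponent hp1
  have hq0 : (0:ℝ) < q := hq.symm.pos
  have hinv : 1/p + 1/q = 1 := by
    rw [one_div, one_div]; exact hq.inv_add_inv_eq_one
  have hsq : s * q = r/p + 1 := by
    have hpm : p - 1 ≠ 0 := by linarith
    have h1 : (p-1)/p * (p/(p-1)) = 1 := by
      field_simp
    calc s * q = (r/p+1) * ((p-1)/p * (p/(p-1))) := by rw [hsdef, hqdef]; ring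
      _ = r/p+1 := by rw [h1, mul_one]
  have hmul : Measurable fun y : ℝ => f y * ENNReal.ofReal (y ^ s) :=
    hf.mul ((measurable_id.pow_const s).ennreal_ofReal)
  have hneg : Measurable fun y : ℝ => ENNReal.ofReal (y ^ (-s)) :=
    (measurable_id.pow_const (-s)).ennreal_ofReal
  set A : ℝ≥0∞ := ∫⁻ y in Set.Ioi x, (f y * ENNReal.ofReal (y ^ s)) ^ p with hA
  have H := ENNReal.lintegral_mul_le_Lp_mul_Lq (volume.restrict (Set.Ioi x)) hq
      hmul.aemeasurable hneg.aemeasurable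
  have e1 : (∫⁻ y in Set.Ioi x,
      ((fun y => f y * ENNReal.ofReal (y ^ s)) * fun y => ENNReal.ofReal (y ^ (-s))) y)
      = ∫⁻ y in Set.Ioi x, f y := by
    refine setLIntegral_congr_fun measurableSet_Ioi
      (fun y hy => ?_)
    have hy0 : (0:ℝ) < y := hx.trans hy
    simp only [Pi.mul_apply]
    rw [mul_assoc, ← ENNReal.ofReal_mul (Real.rpow_nonneg hy0.le _), ← Real.rpow_add hy0]
    simp
  have e2 : (∫⁻ y in Set.Ioi x, (ENNReal.ofReal (y ^ (-s))) ^ q)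
      = ENNReal.ofReal (x ^ (-(r/p)) / (r/p)) := by
    have step : (∫⁻ y in Set.Ioi x, (ENNReal.ofReal (y ^ (-s))) ^ q)
        = ∫⁻ y in Set.Ioi x, ENNReal.ofReal (y ^ (-s * q)) := by
      refine setLIntegral_congr_fun measurableSet_Ioi
        (fun y hy => ?_)
      have hy0 : (0:ℝ) < y := hx.trans hy
      rw [ENNReal.ofReal_rpow_of_pos (Real.rpow_pos_of_pos hy0 _), ← Real.rpow_mul hy0.le]
    have ha : -s * q = -(r/p) - 1 := by rw [neg_mul, hsq]; ring
    rw [step, ha, hardy_lint_tail (by nlinarith [div_pos hr hp0] : -(r/p) - 1 < -1) hx]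
    norm_num
  rw [e1, e2] at H
  have H2 : (∫⁻ y in Set.Ioi x, f y) ^ p ≤
      A * ENNReal.ofReal (x ^ (-(r/q)) * (p/r) ^ (p/q)) := by
    have := ENNReal.rpow_le_rpow H hp0.le
    rw [ENNReal.mul_rpow_of_nonneg _ _ hp0.le, ← ENNReal.rpow_mul, ← ENNReal.rpow_mul,
      one_div_mul_cancel hp0.ne', ENNReal.rpow_one] at this
    refine this.trans (le_of_eq ?_)
    congr 1
    have hcpos : (0:ℝ) < x ^ (-(r/p)) / (r/p) := by positivity
    rw [ENNReal.ofReal_rpow_of_pos hcpos]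
    congr 1
    rw [Real.div_rpow (Real.rpow_nonneg hx.le _) (by positivity),
      ← Real.rpow_mul hx.le]
    have h1 : -(r/p) * (1/q * p) = -(r/q) := by field_simp
    have h2 : (r/p) ^ (1/q * p) = ((p/r) ^ (p/q))⁻¹ := by
      rw [← Real.inv_rpow (by positivity), inv_div]
      congr 1
      ring
    rw [h1, h2, div_eq_mul_inv, inv_inv]
  calc (∫⁻ y in Set.Ioi x, f y) ^ p * ENNReal.ofReal (x ^ (r - 1))
      ≤ (A * ENNReal.ofReal (x ^ (-(r/q)) * (p/r) ^ (p/q))) * ENNReal.ofReal (x ^ (r - 1)) :=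
        mul_le_mul_left H2 _
    _ = ENNReal.ofReal ((p / r) ^ (p / q)) * (ENNReal.ofReal (x ^ (r/p - 1)) * A) := by
        have hexp : -(r/q) + (r - 1) = r/p - 1 := by
          have hr' : r * (1/p) + r * (1/q) = r := by
            rw [← mul_add, hinv, mul_one]
          field_simp at hr' ⊢
          linear_combination -r * hr'
        have key : ENNReal.ofReal (x^(-(r/q))) * ENNReal.ofReal (x^(r-1))
            = ENNReal.ofReal (x^(r/p-1)) := by
          rw [← ENNReal.ofReal_mul (Real.rpow_nonneg hx.le _), ← Real.rpow_add hx, hexp]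
        rw [ENNReal.ofReal_mul (Real.rpow_nonneg hx.le _),
          show A * (ENNReal.ofReal (x ^ (-(r/q))) * ENNReal.ofReal ((p/r) ^ (p/q)))
              * ENNReal.ofReal (x ^ (r-1))
            = (ENNReal.ofReal (x ^ (-(r/q))) * ENNReal.ofReal (x ^ (r-1)))
              * (ENNReal.ofReal ((p/r) ^ (p/q)) * A) from by ring, key]
        ring

theorem hardy_inequality_second (f : ℝ → ℝ≥0∞) (hf : Measurable f) (p r : ℝ)
    (hp : 1 ≤ p) (hr : 0 < r) :
    (∫⁻ x in Set.Ioi (0 : ℝ),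
        (∫⁻ y in Set.Ioi x, f y) ^ p * ENNReal.ofReal (x ^ (r - 1))) ≤
      ENNReal.ofReal ((p / r) ^ p) *
        ∫⁻ y in Set.Ioi (0 : ℝ),
          (ENNReal.ofReal y * f y) ^ p * ENNReal.ofReal (y ^ (r - 1)) := by
  rcases eq_or_lt_of_le hp with hp1 | hp1
  · -- case p = 1
    subst hp1
    have hg : Measurable fun x : ℝ => ENNReal.ofReal (x ^ (r - 1)) :=
      (measurable_id.pow_const (r-1)).ennreal_ofReal
    simp only [ENNReal.rpow_one, Real.rpow_one]
    apply le_of_eq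
    calc (∫⁻ x in Set.Ioi (0 : ℝ), (∫⁻ y in Set.Ioi x, f y) * ENNReal.ofReal (x ^ (r - 1)))
        = ∫⁻ x in Set.Ioi (0:ℝ), ENNReal.ofReal (x ^ (r - 1)) * ∫⁻ y in Set.Ioi x, f y := by
          simp only [mul_comm]
      _ = ∫⁻ y in Set.Ioi (0:ℝ), f y * ∫⁻ x in Set.Ioo 0 y, ENNReal.ofReal (x ^ (r - 1)) :=
          hardy_swap _ f hg hf
      _ = ∫⁻ y in Set.Ioi (0:ℝ), f y * ENNReal.ofReal (y ^ r / r) := by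
          refine setLIntegral_congr_fun measurableSet_Ioi
            (fun y hy => ?_)
          rw [hardy_lint_head (by linarith) hy]
          norm_num
      _ = ENNReal.ofReal (1 / r) *
          ∫⁻ y in Set.Ioi (0 : ℝ), (ENNReal.ofReal y * f y) * ENNReal.ofReal (y ^ (r - 1)) := by
          rw [← lintegral_const_mul' _ _ ENNReal.ofReal_ne_top]
          refine setLIntegral_congr_fun measurableSet_Ioi
            (fun y hy => ?_)
          have hy : (0:ℝ) < y := hy
          have hyy : y * y ^ (r - 1) = y ^ r := by
            nth_rewrite 1 [← Real.rpow_one y]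
            rw [← Real.rpow_add hy]; norm_num
          rw [show ENNReal.ofReal (1/r) * (ENNReal.ofReal y * f y * ENNReal.ofReal (y^(r-1)))
              = f y * (ENNReal.ofReal (1/r) * (ENNReal.ofReal y * ENNReal.ofReal (y^(r-1))))
              from by ring,
            ← ENNReal.ofReal_mul hy.le, hyy, ← ENNReal.ofReal_mul (by positivity)]
          congr 2
          field_simp
  · -- case 1 < p
    set q : ℝ := p / (p - 1) with hqdef
    set s : ℝ := (p-1)/p * (r/p + 1) with hsdef
    have hp0 : (0:ℝ) < p := by linarith
    have hpm : p - 1 ≠ 0 := by linarith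
    have hpq2 : p / q + 1 = p := by
      rw [hqdef]
      field_simp
      ring
    have hgm : Measurable fun x : ℝ => ENNReal.ofReal (x ^ (r/p - 1)) :=
      (measurable_id.pow_const (r/p-1)).ennreal_ofReal
    have hhm : Measurable fun y : ℝ => (f y * ENNReal.ofReal (y ^ s)) ^ p :=
      (hf.mul ((measurable_id.pow_const s).ennreal_ofReal)).pow_const p
    calc (∫⁻ x in Set.Ioi (0 : ℝ),
          (∫⁻ y in Set.Ioi x, f y) ^ p * ENNReal.ofReal (x ^ (r - 1)))
        ≤ ∫⁻ x in Set.Ioi (0:ℝ), ENNReal.ofReal ((p / r) ^ (p / q)) *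
            (ENNReal.ofReal (x ^ (r/p - 1)) *
              ∫⁻ y in Set.Ioi x, (f y * ENNReal.ofReal (y ^ s)) ^ p) :=
          setLIntegral_mono' measurableSet_Ioi fun x hx =>
            hardy_holder_pointwise f hf p r hp1 hr x hx
      _ = ENNReal.ofReal ((p / r) ^ (p / q)) *
            ∫⁻ x in Set.Ioi (0:ℝ), ENNReal.ofReal (x ^ (r/p - 1)) *
              ∫⁻ y in Set.Ioi x, (f y * ENNReal.ofReal (y ^ s)) ^ p :=
          lintegral_const_mul' _ _ ENNReal.ofReal_ne_top
      _ = ENNReal.ofReal ((p / r) ^ (p / q)) *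
            ∫⁻ y in Set.Ioi (0:ℝ), ((f y * ENNReal.ofReal (y ^ s)) ^ p) *
              ∫⁻ x in Set.Ioo 0 y, ENNReal.ofReal (x ^ (r/p - 1)) := by
          rw [hardy_swap _ _ hgm hhm]
      _ = ENNReal.ofReal ((p / r) ^ (p / q)) * (ENNReal.ofReal (p/r) *
            ∫⁻ y in Set.Ioi (0 : ℝ),
              (ENNReal.ofReal y * f y) ^ p * ENNReal.ofReal (y ^ (r - 1))) := by
          congr 1
          rw [← lintegral_const_mul' _ _ ENNReal.ofReal_ne_top]
          refine setLIntegral_congr_fun measurableSet_Ioi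
            (fun y hy => ?_)
          have hy0 : (0:ℝ) < y := hy
          have hrp : (0:ℝ) < r / p := div_pos hr hp0
          rw [hardy_lint_head (by linarith : (-1:ℝ) < r/p - 1) hy0]
          have he : r/p - 1 + 1 = r/p := by ring
          rw [he]
          have hspr : s*p + r/p = p + r - 1 := by
            rw [hsdef]; field_simp; ring
          -- expand both sides
          rw [ENNReal.mul_rpow_of_nonneg _ _ hp0.le, ENNReal.mul_rpow_of_nonneg _ _ hp0.le,
            ENNReal.ofReal_rpow_of_pos hy0,
            ENNReal.ofReal_rpow_of_pos (Real.rpow_pos_of_pos hy0 _),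
            ← Real.rpow_mul hy0.le]
          rw [show f y ^ p * ENNReal.ofReal (y ^ (s*p)) * ENNReal.ofReal (y ^ (r/p) / (r/p))
              = f y ^ p * (ENNReal.ofReal (y ^ (s*p)) * ENNReal.ofReal (y ^ (r/p) / (r/p)))
              from by ring,
            ← ENNReal.ofReal_mul (Real.rpow_nonneg hy0.le _)]
          rw [show ENNReal.ofReal (p/r) * (ENNReal.ofReal (y^p) * f y ^ p
                * ENNReal.ofReal (y^(r-1)))
              = f y ^ p * (ENNReal.ofReal (p/r) * (ENNReal.ofReal (y^p)
                * ENNReal.ofReal (y^(r-1)))) from by ring,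
            ← ENNReal.ofReal_mul (Real.rpow_nonneg hy0.le _),
            ← ENNReal.ofReal_mul (by positivity)]
          congr 2
          rw [div_eq_mul_inv (y ^ (r/p)), ← mul_assoc, ← Real.rpow_add hy0, hspr,
            ← Real.rpow_add hy0]
          have : p + (r - 1) = p + r - 1 := by ring
          rw [this]
          rw [inv_div, mul_comm]
      _ = ENNReal.ofReal ((p / r) ^ p) *
            ∫⁻ y in Set.Ioi (0 : ℝ),
              (ENNReal.ofReal y * f y) ^ p * ENNReal.ofReal (y ^ (r - 1)) := by
          rw [← mul_assoc, ← ENNReal.ofReal_mul (by positivity)]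
          congr 2
          nth_rewrite 2 [show p/r = (p/r) ^ (1:ℝ) from (Real.rpow_one _).symm]
          rw [← Real.rpow_add (by positivity), hpq2]
end
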